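/- Let G be a simple graph, v a vertex of G, and r a positive integer. Let C be an odd cycle contained in the subgraph of G induced by the ball N^{≤r}(v) of all vertices at distance at most r from v, and suppose that the set of vertices of C at distance exactly r from v is an independent set of G. Then the subgraph of G induced by N^{≤r−1}(v) contains an odd cycle of length at most 2r−1. -/

import Mathlib

open SimpleGraph Walk

/-- Any closed walk of odd length contains an odd cycle of length at most the walk's
length, with support inside the walk's support. -/
lemma exists_odd_cycle_of_odd_closed_walk {V : Type*} {G : SimpleGraph V} :
    ∀ (n : ℕ) {u : V} (w : G.Walk u u), w.length = n → Odd n →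
      ∃ (u' : V) (c : G.Walk u' u'), c.IsCycle ∧ Odd c.length ∧ c.length ≤ n ∧
        ∀ x ∈ c.support, x ∈ w.support := by
  intro n
  induction n using Nat.strong_induction_on with
  | _ n ih =>
    intro u w hlen hodd
    classical
    cases w with
    | nil =>
      simp only [Walk.length_nil] at hlen
      subst hlen
      exact absurd hodd (by simp)
    | cons h w₁ =>
      rename_i b
      rw [Walk.length_cons] at hlen
      by_cases h0 : w₁.length = 0
      · have hbu : b = u := Walk.eq_of_length_eq_zero h0
        exact absurd hbu.symm h.ne
      by_cases hnd : w₁.support.Nodup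
      · -- it's already a cycle
        have hp : w₁.IsPath := (Walk.isPath_def _).mpr hnd
        have hlen2 : 2 ≤ w₁.length := by
          rw [Nat.odd_iff] at hodd; omega
        have hne : s(u, b) ∉ w₁.edges := by
          intro hmem
          cases w₁ with
          | nil => simp at hlen2
          | cons h₂ w₂ =>
            rename_i cc
            rw [Walk.edges_cons] at hmem
            rcases List.mem_cons.mp hmem with heq | hmem₂
            · rw [Sym2.eq_iff] at heq
              rcases heq with ⟨hub, _⟩ | ⟨huc, _⟩
              · exact h.ne hub
              · -- cc = u, so w₂ : Walk u u is a nodup-support loop, length 0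
                have hnd₂ : w₂.support.Nodup := by
                  rw [Walk.support_cons, List.nodup_cons] at hnd
                  exact hnd.2
                have hp₂ : w₂.IsPath := (Walk.isPath_def _).mpr hnd₂
                have hlenw₂ : w₂.length = 0 := by
                  subst huc
                  have : (⟨w₂, hp₂⟩ : G.Path u u) = Path.nil := Path.loop_eq _
                  have hnil : w₂ = Walk.nil := congrArg Subtype.val this
                  rw [hnil]; rfl
                rw [Walk.length_cons, hlenw₂] at hlen2
                omega
            · have hbmem : b ∈ w₂.support := w₂.snd_mem_support_of_mem_edges hmem₂
              rw [Walk.support_cons, List.nodup_cons] at hnd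
              exact hnd.1 hbmem
        refine ⟨u, Walk.cons h w₁, (Walk.cons_isCycle_iff w₁ h).mpr ⟨hp, hne⟩, ?_, ?_, ?_⟩
        · rwa [Walk.length_cons, hlen]
        · rw [Walk.length_cons, hlen]
        · exact fun x hx => hx
      · -- split the walk at a repeated vertex
        obtain ⟨x, hdup⟩ := List.exists_duplicate_iff_not_nodup.mpr hnd
        have hcount : 2 ≤ w₁.support.count x := List.duplicate_iff_two_le_count.mp hdup
        have hx : x ∈ w₁.support := hdup.mem
        have hspec := w₁.take_spec hx
        have hct : (w₁.takeUntil x hx).support.count x = 1 :=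
          w₁.count_support_takeUntil_eq_one hx
        have hxtail : x ∈ (w₁.dropUntil x hx).support.tail := by
          have hsupp : w₁.support
              = (w₁.takeUntil x hx).support ++ (w₁.dropUntil x hx).support.tail := by
            rw [← Walk.support_append, hspec]
          rw [hsupp, List.count_append] at hcount
          have : 1 ≤ (w₁.dropUntil x hx).support.tail.count x := by omega
          exact List.count_pos_iff.mp (by omega)
        set d := w₁.dropUntil x hx with hd
        have hdnil : ¬d.Nil := by
          rw [Walk.not_nil_iff_lt_length]
          have h1 : 0 < d.support.tail.length := List.length_pos_of_mem hxtail
          rw [List.length_tail] at h1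
          have h2 : d.support.length = d.length + 1 := Walk.length_support d
          omega
        have hdecomp := d.cons_tail_eq hdnil
        set d₁ := d.tail with hd₁
        have hxd₁ : x ∈ d₁.support := by
          have : d.support = x :: d₁.support := by
            conv_lhs => rw [← hdecomp]
            rw [Walk.support_cons]
          rw [this, List.tail_cons] at hxtail
          exact hxtail
        set e := d₁.takeUntil x hxd₁ with he
        set f := d₁.dropUntil x hxd₁ with hf
        have hef := d₁.take_spec hxd₁
        -- two closed walks at x
        set A : G.Walk x x := Walk.cons (d.adj_snd hdnil) e with hA
        set B : G.Walk x x := f.append (Walk.cons h (w₁.takeUntil x hx)) with hB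
        have hlenA : A.length = e.length + 1 := Walk.length_cons _ _
        have hlenB : B.length = f.length + ((w₁.takeUntil x hx).length + 1) := by
          rw [hB, Walk.length_append, Walk.length_cons]
        have hsum1 : e.length + f.length = d₁.length := by
          have := congrArg Walk.length hef
          rwa [Walk.length_append] at this
        have hsum2 : (w₁.takeUntil x hx).length + d.length = w₁.length := by
          have := congrArg Walk.length hspec
          rwa [Walk.length_append] at this
        have hsum3 : d.length = d₁.length + 1 := by
          have := congrArg Walk.length hdecomp
          rw [Walk.length_cons] at this
          omega
        have hAB : A.length + B.length = n := by omega
        have hA1 : 1 ≤ A.length := by omega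
        have hB1 : 1 ≤ B.length := by omega
        -- supports
        have hsuppA : ∀ z ∈ A.support, z ∈ (Walk.cons h w₁).support := by
          intro z hz
          rw [hA, Walk.support_cons] at hz
          rw [Walk.support_cons]
          rcases List.mem_cons.mp hz with rfl | hz
          · exact List.mem_cons_of_mem _ hx
          · have hz₁ : z ∈ d₁.support := Walk.support_takeUntil_subset _ _ hz
            have hz₂ : z ∈ d.support := by
              have : d.support = x :: d₁.support := by
                conv_lhs => rw [← hdecomp]
                rw [Walk.support_cons]
              rw [this]
              exact List.mem_cons_of_mem _ hz₁
            exact List.mem_cons_of_mem _ (Walk.support_dropUntil_subset _ hx hz₂)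
        have hsuppB : ∀ z ∈ B.support, z ∈ (Walk.cons h w₁).support := by
          intro z hz
          rw [hB, Walk.mem_support_append_iff] at hz
          rw [Walk.support_cons]
          rcases hz with hz | hz
          · have hz₁ : z ∈ d₁.support := Walk.support_dropUntil_subset _ _ hz
            have hz₂ : z ∈ d.support := by
              have : d.support = x :: d₁.support := by
                conv_lhs => rw [← hdecomp]
                rw [Walk.support_cons]
              rw [this]
              exact List.mem_cons_of_mem _ hz₁
            exact List.mem_cons_of_mem _ (Walk.support_dropUntil_subset _ hx hz₂)
          · rw [Walk.support_cons] at hz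
            rcases List.mem_cons.mp hz with rfl | hz
            · exact List.mem_cons_self
            · exact List.mem_cons_of_mem _ (Walk.support_takeUntil_subset _ hx hz)
        have hoddAB : Odd A.length ∨ Odd B.length := by
          rw [Nat.odd_iff] at hodd ⊢
          rw [Nat.odd_iff]
          omega
        rcases hoddAB with hoA | hoB
        · obtain ⟨u', c, hc, ho, hle, hs⟩ := ih A.length (by omega) A rfl hoA
          exact ⟨u', c, hc, ho, by omega, fun z hz => hsuppA z (hs z hz)⟩
        · obtain ⟨u', c, hc, ho, hle, hs⟩ := ih B.length (by omega) B rfl hoB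
          exact ⟨u', c, hc, ho, by omega, fun z hz => hsuppB z (hs z hz)⟩

/-- Let `C` be an odd cycle contained in the ball of radius `r`
around `v` (encoded: every vertex of `C` is joined to `v` by a walk of length at
most `r`), and suppose the vertices of `C` at distance exactly `r` from `v` form an
independent set. Then the ball of radius `r-1` around `v` contains an odd cycle of
length at most `2r-1`. -/
theorem odd_cycle_in_smaller_ball
    {V : Type*} (G : SimpleGraph V) (v : V) (r : ℕ) (hr : 1 ≤ r)
    (u : V) (c : G.Walk u u) (hc : c.IsCycle) (hodd : Odd c.length)
    (hball : ∀ x ∈ c.support, ∃ p : G.Walk v x, p.length ≤ r)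
    (hindep : ∀ x ∈ c.support, ∀ y ∈ c.support,
      G.dist v x = r → G.dist v y = r → ¬ G.Adj x y) :
    ∃ (u' : V) (c' : G.Walk u' u'), c'.IsCycle ∧ Odd c'.length ∧
      c'.length ≤ 2 * r - 1 ∧
      ∀ x ∈ c'.support, ∃ p : G.Walk v x, p.length ≤ r - 1 := by
  classical
  -- vertices of the cycle, indexed
  have hmem : ∀ i, i ≤ c.length → c.getVert i ∈ c.support := by
    intro i hi
    exact Walk.mem_support_iff_exists_getVert.mpr ⟨i, rfl, hi⟩
  have hreach : ∀ z ∈ c.support, G.Reachable v z := by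
    intro z hz
    obtain ⟨p, _⟩ := hball z hz
    exact ⟨p⟩
  have hadjdist : ∀ {z w : V}, G.Reachable v z → G.Adj z w →
      G.dist v w ≤ G.dist v z + 1 := by
    intro z w hrz hzw
    obtain ⟨p, hp⟩ := hrz.exists_walk_length_eq_dist
    calc G.dist v w ≤ (p.concat hzw).length := SimpleGraph.dist_le _
      _ = G.dist v z + 1 := by rw [Walk.length_concat, hp]
  set F : ℕ → ℕ := fun i => G.dist v (c.getVert i) with hF
  have hexists : ∃ i < c.length, F i = F (i + 1) := by
    by_contra hno
    push_neg at hno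
    have hstep : ∀ i < c.length, F (i + 1) = F i + 1 ∨ F i = F (i + 1) + 1 := by
      intro i hi
      have hadj := c.adj_getVert_succ hi
      have h1 : F (i + 1) ≤ F i + 1 :=
        hadjdist (hreach _ (hmem i (le_of_lt hi))) hadj
      have h2 : F i ≤ F (i + 1) + 1 :=
        hadjdist (hreach _ (hmem (i + 1) hi)) hadj.symm
      have hne := hno i hi
      omega
    have key : ∀ i, i ≤ c.length → (F i + i) % 2 = F 0 % 2 := by
      intro i
      induction i with
      | zero => simp
      | succ k ihk =>
        intro hk
        have hk' : k < c.length := hk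
        have hkk := ihk (le_of_lt hk')
        rcases hstep k hk' with hc1 | hc1 <;> omega
    have h0 : F c.length = F 0 := by
      simp only [hF, Walk.getVert_length, Walk.getVert_zero]
    have hkey := key c.length le_rfl
    rw [Nat.odd_iff] at hodd
    omega
  obtain ⟨i, hi, heq⟩ := hexists
  set x := c.getVert i with hxdef
  set y := c.getVert (i + 1) with hydef
  have hadj : G.Adj x y := c.adj_getVert_succ hi
  have hxs : x ∈ c.support := hmem i (le_of_lt hi)
  have hys : y ∈ c.support := hmem (i + 1) hi
  set k := G.dist v x with hk
  have hky : G.dist v y = k := heq.symm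
  have hkr : k ≤ r := by
    obtain ⟨p, hp⟩ := hball x hxs
    exact le_trans (SimpleGraph.dist_le p) hp
  have hkne : k ≠ r := by
    intro hkr'
    exact hindep x hxs y hys hkr' (by rw [hky, hkr']) hadj
  have hk1 : k ≤ r - 1 := by omega
  obtain ⟨p, hp⟩ := (hreach x hxs).exists_walk_length_eq_dist
  obtain ⟨q, hq⟩ := (hreach y hys).exists_walk_length_eq_dist
  set w : G.Walk v v := p.append (Walk.cons hadj q.reverse) with hw
  have hwlen : w.length = 2 * k + 1 := by
    rw [hw, Walk.length_append, Walk.length_cons, Walk.length_reverse, hp, hq, hky]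
    omega
  have hwodd : Odd w.length := by rw [hwlen]; exact ⟨k, by omega⟩
  obtain ⟨u', c', hc', ho', hle', hs'⟩ :=
    exists_odd_cycle_of_odd_closed_walk w.length w rfl hwodd
  refine ⟨u', c', hc', ho', by omega, ?_⟩
  intro z hz
  have hzw : z ∈ w.support := hs' z hz
  rw [hw, Walk.mem_support_append_iff] at hzw
  rcases hzw with hzp | hzc
  · exact ⟨p.takeUntil z hzp, by
      have := p.length_takeUntil_le hzp
      omega⟩
  · rw [Walk.support_cons] at hzc
    rcases List.mem_cons.mp hzc with rfl | hzq
    · exact ⟨p, by omega⟩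
    · rw [Walk.support_reverse, List.mem_reverse] at hzq
      exact ⟨q.takeUntil z hzq, by
        have := q.length_takeUntil_le hzq
        rw [hq, hky] at this
        omega⟩
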